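/- There exists a constant h_0 > 0 (depending only on d) such that for every integer k ≥ h_0, the largest real root x of the polynomial d^{k+1}x^{2k+2} − d^{k+1}x^{2k+1} + dx − 1 satisfies 1 − a/d^{k+1} < x < 1 − (d−1)/d^{k+1}, where a = d − 1 + 2(d−1)²(k+1)/d^{k+1}. Moreover, the corresponding value λ = (d/(d+1))·(x + 1/(dx)) satisfies |λ − (1 − (d−1)²/((d+1)·d^{k+1}))| ≤ 2(k+1)/d^{2k}. -/

import Mathlib

open Filter Set Topology

private lemma bern_low (s : ℝ) (hs : s ≤ 2) (n : ℕ) : 1 - (n : ℝ) * s ≤ (1 - s) ^ n := by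
  have h := one_add_mul_le_pow (a := -s) (by linarith) n
  calc 1 - (n:ℝ) * s = 1 + (n:ℝ) * (-s) := by ring
    _ ≤ (1 + -s) ^ n := h
    _ = (1 - s) ^ n := by rw [← sub_eq_add_neg]

private lemma bern_high (s : ℝ) (h0 : 0 ≤ s) (h1 : s ≤ 1) (n : ℕ) :
    (1 - s) ^ n ≤ 1 / (1 + (n:ℝ) * s) := by
  have hpos : (0:ℝ) < 1 + (n:ℝ) * s := by positivity
  have hb : 1 + (n:ℝ) * s ≤ (1 + s) ^ n := one_add_mul_le_pow (by linarith) n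
  rw [le_div_iff₀ hpos]
  have h2 : (1 - s) ^ n * (1 + (n:ℝ)*s) ≤ (1-s)^n * (1+s)^n :=
    mul_le_mul_of_nonneg_left hb (pow_nonneg (by linarith) n)
  have h3 : (1-s)^n * (1+s)^n = (1 - s^2)^n := by
    rw [← mul_pow]; ring_nf
  have h4 : (1 - s^2)^n ≤ 1 := pow_le_one₀ (by nlinarith) (by nlinarith)
  calc (1-s)^n * (1 + (n:ℝ)*s) ≤ (1-s)^n * (1+s)^n := h2
    _ = (1 - s^2)^n := h3
    _ ≤ 1 := h4

set_option maxHeartbeats 4000000 in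
theorem stmt_17 (d : ℕ) (hd : 2 ≤ d) :
    ∃ h0 : ℕ, 0 < h0 ∧ ∀ k : ℕ, h0 ≤ k → ∃ x : ℝ,
      ((d : ℝ) ^ (k + 1) * x ^ (2 * k + 2) - (d : ℝ) ^ (k + 1) * x ^ (2 * k + 1)
        + d * x - 1 = 0) ∧
      (∀ z : ℝ, (d : ℝ) ^ (k + 1) * z ^ (2 * k + 2) - (d : ℝ) ^ (k + 1) * z ^ (2 * k + 1)
        + d * z - 1 = 0 → z ≤ x) ∧
      1 - ((d : ℝ) - 1 + 2 * ((d : ℝ) - 1) ^ 2 * ((k : ℝ) + 1) / (d : ℝ) ^ (k + 1))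
          / (d : ℝ) ^ (k + 1) < x ∧
      x < 1 - ((d : ℝ) - 1) / (d : ℝ) ^ (k + 1) ∧
      |(d : ℝ) / ((d : ℝ) + 1) * (x + 1 / ((d : ℝ) * x))
          - (1 - ((d : ℝ) - 1) ^ 2 / (((d : ℝ) + 1) * (d : ℝ) ^ (k + 1)))|
        ≤ 2 * ((k : ℝ) + 1) / (d : ℝ) ^ (2 * k) := by
  have hD2 : (2:ℝ) ≤ (d:ℝ) := by exact_mod_cast hd
  have hD0 : (0:ℝ) < (d:ℝ) := by linarith
  have htend : Tendsto (fun n : ℕ => ((n:ℝ))^2 * (1/(d:ℝ))^n) atTop (𝓝 0) := by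
    have hs : Summable (fun n : ℕ => ((n:ℝ))^2 * (1/(d:ℝ))^n) := by
      apply summable_pow_mul_geometric_of_norm_lt_one
      rw [Real.norm_eq_abs, abs_of_pos (by positivity), div_lt_one hD0]
      linarith
    exact hs.tendsto_atTop_zero
  obtain ⟨N, hN⟩ := eventually_atTop.mp (htend.eventually_lt_const
    (show (0:ℝ) < 1/(16*(d:ℝ)^2) by positivity))
  refine ⟨max N (4*d) + 1, Nat.succ_pos _, fun k hk => ?_⟩
  have hkN : N ≤ k := le_trans (le_max_left _ _) (Nat.le_of_succ_le hk)
  have hk4d : 4*d ≤ k := le_trans (le_max_right _ _) (Nat.le_of_succ_le hk)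
  have hk8 : 8 ≤ k := le_trans (by omega) hk4d
  have hkR8 : (8:ℝ) ≤ (k:ℝ) := by exact_mod_cast hk8
  have hkD : (d:ℝ) ≤ (k:ℝ) := by exact_mod_cast (by omega : d ≤ k)
  set D := (d:ℝ) with hDdef
  clear_value D
  have hD1 : (1:ℝ) ≤ D - 1 := by linarith
  set P := D^(k+1) with hPdef
  have hP0 : 0 < P := by rw [hPdef]; positivity
  clear_value P
  -- growth bound
  have h16 : 16*D^2*((k:ℝ))^2 < D^k := by
    have hgrow := hN k hkN
    have hDk0 : (0:ℝ) < D^k := by positivity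
    rw [one_div, inv_pow, ← one_div] at hgrow
    rw [mul_one_div, div_lt_div_iff₀ hDk0 (by positivity)] at hgrow
    nlinarith only [hgrow]
  have hStar : 8*D^2*((k:ℝ)+1)*(2*(k:ℝ)+1) ≤ P := by
    have hPk : P = D * D^k := by rw [hPdef, pow_succ]; ring
    rw [hPk]
    nlinarith only [mul_lt_mul_of_pos_left h16 hD0, hkR8, hD2,
      mul_nonneg (mul_nonneg (by linarith : (0:ℝ) ≤ D - 2) (by linarith : (0:ℝ) ≤ (k:ℝ)))
        (by linarith : (0:ℝ) ≤ (k:ℝ)), sq_nonneg ((k:ℝ)-2)]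
  clear htend hN hkN h16
  -- sigma, a, L, U
  set K := (k:ℝ)+1 with hKdef
  clear_value K
  have hK1 : (1:ℝ) ≤ K := by rw [hKdef]; linarith only [hkR8]
  have hK9 : (9:ℝ) ≤ K := by rw [hKdef]; linarith only [hkR8]
  have hKD : D ≤ K := by rw [hKdef]; linarith only [hkD]
  have h2k1 : (17:ℝ) ≤ 2*(k:ℝ)+1 := by linarith only [hkR8]
  set σ := 2*(D-1)^2*K/P with hσdef
  clear_value σ
  have hσP : σ*P = 2*(D-1)^2*K := by rw [hσdef]; field_simp
  have hsq1 : (0:ℝ) < (D-1)^2 := by nlinarith only [hD1]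
  have hσ0 : 0 < σ := by
    rw [hσdef]; exact div_pos (by nlinarith only [hsq1, hK1]) hP0
  have hσ1 : σ ≤ 1 := by
    rw [hσdef, div_le_one hP0]
    have t1 : 2*(D-1)^2*K ≤ 8*D^2*K :=
      mul_le_mul_of_nonneg_right (by nlinarith only [hD2, sq_nonneg D] : 2*(D-1)^2 ≤ 8*D^2)
        (by linarith only [hK1])
    have t2 : 8*D^2*K*1 ≤ 8*D^2*K*(2*(k:ℝ)+1) :=
      mul_le_mul_of_nonneg_left (by linarith only [h2k1])
        (by nlinarith only [hD0, hK1] : (0:ℝ) ≤ 8*D^2*K)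
    linarith only [t1, t2, hStar]
  set a := D - 1 + σ with hadef
  clear_value a
  have haD : a ≤ D := by rw [hadef]; linarith only [hσ1]
  have ha1 : 1 ≤ a := by rw [hadef]; linarith only [hσ0, hD1]
  have ha0 : 0 < a := by linarith only [ha1]
  have hP8D : 8*D^2 ≤ P := by
    have h1 : (1:ℝ) ≤ K*(2*(k:ℝ)+1) := by nlinarith only [hK1, h2k1]
    calc 8*D^2 = 8*D^2*1 := by ring
      _ ≤ 8*D^2*(K*(2*(k:ℝ)+1)) := by
          apply mul_le_mul_of_nonneg_left h1 (by positivity)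
      _ = 8*D^2*K*(2*(k:ℝ)+1) := by ring
      _ ≤ P := hStar
  have haP : a/P ≤ 1/(8*D) := by
    rw [div_le_div_iff₀ hP0 (by linarith only [hD0])]
    have := mul_le_mul_of_nonneg_left haD (show (0:ℝ) ≤ 8*D by linarith only [hD0])
    linarith only [hP8D, this]
  have haP16 : a/P ≤ 1/16 := by
    have h1 : 1/(8*D) ≤ (1:ℝ)/16 := by
      rw [div_le_div_iff₀ (by linarith only [hD0]) (by norm_num)]
      linarith only [hD2]
    linarith only [haP, h1]
  have haP0 : 0 < a/P := div_pos ha0 hP0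
  set L := 1 - a/P with hLdef
  clear_value L
  set U := 1 - (D-1)/P with hUdef
  clear_value U
  have hL15 : 15/16 ≤ L := by rw [hLdef]; linarith only [haP16]
  have hLU : L < U := by
    rw [hLdef, hUdef]
    have h1 : a*P = (D-1)*P + σ*P := by rw [hadef]; ring
    have h2 : (D-1)/P < a/P := by
      rw [div_lt_div_iff₀ hP0 hP0]
      linarith only [h1, mul_pos hσ0 hP0]
    linarith only [h2]
  have hU1 : U < 1 := by
    rw [hUdef]
    have : 0 < (D-1)/P := div_pos (by linarith only [hD1]) hP0
    linarith only [this]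
  -- factored form
  have hfact : ∀ z : ℝ, P * z ^ (2*k+2) - P * z ^ (2*k+1) + D * z - 1
      = P * z ^ (2*k+1) * (z-1) + D * z - 1 := by
    intro z; ring
  -- f(L) < 0
  have hLpow : 1 - (2*(k:ℝ)+1)*(a/P) ≤ L^(2*k+1) := by
    have h := bern_low (a/P) (by linarith only [haP16]) (2*k+1)
    push_cast at h
    rw [← hLdef] at h
    linarith only [h]
  have hgL : P * L ^ (2*k+2) - P * L ^ (2*k+1) + D * L - 1 < 0 := by
    rw [hfact L]
    have hL1 : L - 1 = -(a/P) := by rw [hLdef]; ring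
    have e1 : P * L^(2*k+1) * (L-1) = -(a * L^(2*k+1)) := by
      rw [hL1]; field_simp
    rw [e1]
    have hσ21 : σ*(2*(k:ℝ)+1) ≤ 1/4 := by
      rw [hσdef, div_mul_eq_mul_div, div_le_iff₀ hP0]
      nlinarith only [hStar, hK1, h2k1, hD1,
        mul_nonneg (mul_nonneg (by nlinarith only [hD0, hD1] : (0:ℝ) ≤ 2*D^2 - 2*(D-1)^2)
          (by linarith only [hK1] : (0:ℝ) ≤ K)) (by linarith only [h2k1] : (0:ℝ) ≤ 2*(k:ℝ)+1)]
    have hDD : (D-1) ≤ (D-1)^2 := by nlinarith only [hD1]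
    have hcore : a^2*(2*(k:ℝ)+1) < σ*P := by
      rw [hσP, hadef]
      have h2K : 2*(D-1)^2*K = (D-1)^2*(2*(k:ℝ)+1) + (D-1)^2 := by rw [hKdef]; ring
      rw [h2K]
      nlinarith only [hσ21, hσ0, hσ1, hD1, hDD,
        mul_le_mul_of_nonneg_left hσ21 (by linarith only [hD1] : (0:ℝ) ≤ 2*(D-1)),
        mul_le_mul_of_nonneg_left hσ21 hσ0.le]
    have h2 : a^2*(2*(k:ℝ)+1)/P < σ := (div_lt_iff₀ hP0).mpr hcore
    have h1 : a*(1 - (2*(k:ℝ)+1)*(a/P)) ≤ a*L^(2*k+1) :=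
      mul_le_mul_of_nonneg_left hLpow (by linarith only [ha0])
    have hexp : a*(1 - (2*(k:ℝ)+1)*(a/P)) = a - a^2*(2*(k:ℝ)+1)/P := by ring
    have hDL : D*L = D - D*(a/P) := by rw [hLdef]; ring
    have h3 : 0 ≤ D*(a/P) := by positivity
    rw [hexp] at h1
    have ha' : a - σ = D - 1 := by rw [hadef]; ring
    linarith only [h1, h2, h3, hDL, ha']
  -- f positive on [U, ∞)
  have hgpos : ∀ z : ℝ, U ≤ z → 0 < P * z ^ (2*k+2) - P * z ^ (2*k+1) + D * z - 1 := by
    intro z hz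
    have hz0 : 0 < z := by linarith only [hz, hLU, hL15]
    rw [hfact z]
    rcases le_or_gt 1 z with h1 | h1
    · have hnn : 0 ≤ P*z^(2*k+1)*(z-1) :=
        mul_nonneg (mul_nonneg hP0.le (pow_nonneg hz0.le _)) (by linarith only [h1])
      have hDz : D*1 ≤ D*z := mul_le_mul_of_nonneg_left h1 hD0.le
      linarith only [hnn, hDz, hD2]
    · set s := 1 - z with hs
      clear_value s
      have hs0 : 0 < s := by rw [hs]; linarith only [h1]
      have hz1 : z - 1 = -s := by rw [hs]; ring
      have hsU : s*P ≤ D-1 := by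
        have h5 : 1 - z ≤ (D-1)/P := by rw [hUdef] at hz; linarith only [hz]
        calc s*P = (1-z)*P := by rw [hs]
          _ ≤ ((D-1)/P)*P := mul_le_mul_of_nonneg_right h5 hP0.le
          _ = D-1 := by field_simp
      have hs1 : s ≤ 1 := by nlinarith only [hsU, hP8D, hP0, hD2]
      have hzpow0 : (0:ℝ) ≤ z^(2*k+1) := pow_nonneg hz0.le _
      have hzpow1 : z^(2*k+1) ≤ 1 := pow_le_one₀ hz0.le (by linarith only [h1])
      have e2 : P * z^(2*k+1) * (z-1) = -((P*s) * z^(2*k+1)) := by rw [hz1]; ring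
      rw [e2]
      have hDz : D*z = D - D*s := by rw [hs]; ring
      have hDm1 : (0:ℝ) < D*(D-1) := mul_pos hD0 (by linarith only [hD1])
      rcases le_or_gt (P*(P*s)) ((D-1)*(P - 2*D)) with hA | hB
      · -- easy region
        have e1 : (P*s) * z^(2*k+1) ≤ P*s := by
          calc (P*s) * z^(2*k+1) ≤ (P*s) * 1 :=
                mul_le_mul_of_nonneg_left hzpow1 (mul_pos hP0 hs0).le
            _ = P*s := by ring
        have e1' : P*((P*s) * z^(2*k+1)) ≤ P*(P*s) := mul_le_mul_of_nonneg_left e1 hP0.le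
        have hsU' : D*(s*P) ≤ D*(D-1) := mul_le_mul_of_nonneg_left hsU hD0.le
        have e5 : P * (-((P*s) * z^(2*k+1)) + D*z - 1)
            = -(P*((P*s) * z^(2*k+1))) + ((D-1)*P - D*(s*P)) := by
          linear_combination P * hDz
        have hPgoal : 0 < P * (-((P*s) * z^(2*k+1)) + D*z - 1) := by
          rw [e5]
          linarith only [e1', hA, hsU', hDm1]
        by_contra hcon
        push_neg at hcon
        linarith only [hPgoal, mul_le_mul_of_nonneg_left hcon hP0.le]
      · -- near U
        have hup : z^(2*k+1) ≤ 1/(1+(2*(k:ℝ)+1)*s) := by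
          have h := bern_high s hs0.le hs1 (2*k+1)
          push_cast at h
          have e3 : (1:ℝ) - s = z := by rw [hs]; ring
          rw [e3] at h
          exact h
        have hq0 : (0:ℝ) < 1+(2*(k:ℝ)+1)*s := by
          have : (0:ℝ) ≤ (2*(k:ℝ)+1)*s := mul_nonneg (by linarith only [h2k1]) hs0.le
          linarith only [this]
        have hwq : (P*s)*z^(2*k+1)*(1+(2*(k:ℝ)+1)*s) ≤ P*s := by
          have h := mul_le_mul_of_nonneg_left hup (mul_pos hP0 hs0).le
          calc (P*s)*z^(2*k+1)*(1+(2*(k:ℝ)+1)*s)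
              ≤ ((P*s)*(1/(1+(2*(k:ℝ)+1)*s)))*(1+(2*(k:ℝ)+1)*s) :=
                mul_le_mul_of_nonneg_right h hq0.le
            _ = P*s := by field_simp
        have hPs7 : 7*(D-1) ≤ 8*(P*s) := by
          have hP16D : 16*D ≤ P := by
            nlinarith only [hP8D, hD2, mul_nonneg (by linarith only [hD0] : (0:ℝ) ≤ 8*D)
              (by linarith only [hD2] : (0:ℝ) ≤ D-2)]
          have h7 : 7*(D-1)*P ≤ 8*(P*(P*s)) := by
            nlinarith only [hB, hP16D, hD1,
              mul_le_mul_of_nonneg_left hP16D (by linarith only [hD1] : (0:ℝ) ≤ D-1)]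
          nlinarith only [h7, hP0]
        have hu8 : (2*(k:ℝ)+1)*s ≤ 1/8 := by
          have hh1 : (2*(k:ℝ)+1)*(s*P) ≤ (2*(k:ℝ)+1)*(D-1) :=
            mul_le_mul_of_nonneg_left hsU (by linarith only [h2k1])
          have hh2 : 8*((2*(k:ℝ)+1)*(D-1)) ≤ P := by
            have e6 : 8*((2*(k:ℝ)+1)*(D-1)) ≤ 8*D^2*K*(2*(k:ℝ)+1) := by
              nlinarith only [h2k1,
                mul_nonneg (mul_nonneg
                  (by nlinarith only [hD2, hK1, sq_nonneg (D-1), hD0,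
                    mul_nonneg (sq_nonneg D) (by linarith only [hK1] : (0:ℝ) ≤ K - 1)]
                    : (0:ℝ) ≤ D^2*K - (D-1)) (by norm_num : (0:ℝ) ≤ (8:ℝ)))
                  (by linarith only [h2k1] : (0:ℝ) ≤ 2*(k:ℝ)+1)]
            linarith only [hStar, e6]
          have hh3 : (2*(k:ℝ)+1)*(s*P) ≤ P/8 := by linarith only [hh1, hh2]
          nlinarith only [hh3, hP0]
        have key : 0 < (D-1) * (1+(2*(k:ℝ)+1)*s) - P*s - (D*s)*(1+(2*(k:ℝ)+1)*s) := by
          have m1 : 17*((D-1)*s) ≤ (2*(k:ℝ)+1)*((D-1)*s) :=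
            mul_le_mul_of_nonneg_right h2k1 (mul_nonneg (by linarith only [hD1]) hs0.le)
          have m2 : (D*s)*((2*(k:ℝ)+1)*s) ≤ (D*s)*(1/8) :=
            mul_le_mul_of_nonneg_left hu8 (mul_nonneg hD0.le hs0.le)
          have m5 : 2*s ≤ D*s := mul_le_mul_of_nonneg_right hD2 hs0.le
          nlinarith only [hsU, m1, m2, m5, hs0]
        by_contra hcon
        push_neg at hcon
        have hcon' : 0 ≤ ((P*s)*z^(2*k+1) - (D*z - 1)) * (1+(2*(k:ℝ)+1)*s) :=
          mul_nonneg (by linarith only [hcon]) hq0.le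
        have e7 : (D*z - 1)*(1+(2*(k:ℝ)+1)*s)
            = (D-1)*(1+(2*(k:ℝ)+1)*s) - (D*s)*(1+(2*(k:ℝ)+1)*s) := by
          linear_combination (1+(2*(k:ℝ)+1)*s) * hDz
        nlinarith only [key, hwq, hcon', e7]
  -- IVT root
  have hcont : Continuous (fun z : ℝ => P * z ^ (2*k+2) - P * z ^ (2*k+1) + D * z - 1) := by
    continuity
  have hivt := intermediate_value_Ioo hLU.le hcont.continuousOn
  obtain ⟨r, hrmem, hr0⟩ := hivt (show (0:ℝ) ∈ Ioo _ _ from ⟨hgL, hgpos U le_rfl⟩)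
  set S : Set ℝ := {z : ℝ | P * z ^ (2*k+2) - P * z ^ (2*k+1) + D * z - 1 = 0} with hSdef
  have hSne : S.Nonempty := ⟨r, hr0⟩
  have hSbdd : BddAbove S := by
    refine ⟨U, fun z hz => ?_⟩
    by_contra hzz
    push_neg at hzz
    exact (hgpos z hzz.le).ne' hz
  have hSclosed : IsClosed S := isClosed_eq hcont continuous_const
  have hxS : sSup S ∈ S := hSclosed.csSup_mem hSne hSbdd
  set x := sSup S with hxdef
  have hxU : x < U := by
    rcases lt_or_ge x U with h | h
    · exact h
    · exact absurd hxS ((hgpos x h).ne')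
  have hxL : L < x := lt_of_lt_of_le hrmem.1 (le_csSup hSbdd hr0)
  have hx0 : 0 < x := by linarith only [hxL, hL15]
  have hx1 : x < 1 := by linarith only [hxU, hU1]
  have hxlow : 1 - 1/(8*D) ≤ x := by
    rw [hLdef] at hxL
    linarith only [hxL, haP]
  refine ⟨x, hxS, fun z hz => le_csSup hSbdd hz, hxL, hxU, ?_⟩
  -- lambda bound
  have hβ1 : D - 1 < (1-x)*P := by
    have h5 : (D-1)/P < 1 - x := by rw [hUdef] at hxU; linarith only [hxU]
    calc D - 1 = ((D-1)/P)*P := (div_mul_cancel₀ _ hP0.ne').symm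
      _ < (1-x)*P := mul_lt_mul_of_pos_right h5 hP0
  have hβ2 : (1-x)*P < a := by
    have h5 : 1 - x < a/P := by rw [hLdef] at hxL; linarith only [hxL]
    calc (1-x)*P < (a/P)*P := mul_lt_mul_of_pos_right h5 hP0
      _ = a := div_mul_cancel₀ _ hP0.ne'
  have hβ0 : 0 < (1-x)*P := by linarith only [hβ1, hD1]
  have hβD : (1-x)*P < D := lt_of_lt_of_le hβ2 haD
  have hid : D/(D+1)*(x + 1/(D*x)) - (1 - (D-1)^2/((D+1)*P))
      = ((D*x-1)*(x-1)*P + (D-1)^2*x)/((D+1)*x*P) := by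
    field_simp
    ring
  rw [hid, abs_div, abs_of_pos (show (0:ℝ) < (D+1)*x*P by positivity),
    div_le_iff₀ (show (0:ℝ) < (D+1)*x*P by positivity)]
  have hkey : P*P = D^(2*k)*(D*D) := by
    rw [hPdef]; ring
  have hDk0 : (0:ℝ) < D^(2*k) := by positivity
  have heq : 2*K/D^(2*k)*((D+1)*x*P) = (2*K*(D+1)*x*(D*D))/P := by
    rw [div_mul_eq_mul_div, div_eq_div_iff hDk0.ne' hP0.ne']
    linear_combination (2*K*(D+1)*x) * hkey
  rw [heq, le_div_iff₀ hP0]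
  -- now : |G| * P ≤ 2K(D+1)x D^2
  have e9 : ((D*x-1)*(x-1)*P + (D-1)^2*x)*P
      = (D-1)*P*((D-1) - (1-x)*P) + D*((1-x)*P)^2 - (D-1)^2*((1-x)*P) := by ring
  have m9 : (0:ℝ) ≤ (D - (1-x)*P)*(D + (1-x)*P) :=
    mul_nonneg (by linarith only [hβD]) (by linarith only [hβ0, hD0])
  have m10 : (0:ℝ) ≤ D*((D - (1-x)*P)*(D + (1-x)*P)) := mul_nonneg hD0.le m9
  have m6 : (0:ℝ) ≤ (D-1)*P*((1-x)*P - (D-1)) :=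
    mul_nonneg (mul_nonneg (by linarith only [hD1]) hP0.le) (by linarith only [hβ1])
  have m11 : (0:ℝ) ≤ (D-1)^2*((1-x)*P) := mul_nonneg (sq_nonneg _) hβ0.le
  have mD3 : (0:ℝ) < D*(D*D) := by positivity
  have hGub : ((D*x-1)*(x-1)*P + (D-1)^2*x)*P ≤ 2*(D-1)^3*K + 2*D*(D*D) := by
    rw [e9]
    have hcube : (0:ℝ) ≤ (D-1)*(D-1)*(D-1) :=
      mul_nonneg (mul_nonneg (by linarith only [hD1]) (by linarith only [hD1]))
        (by linarith only [hD1])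
    have hKpos : (0:ℝ) ≤ 2*(D-1)^3*K := by
      nlinarith only [hcube, hK1]
    nlinarith only [m6, m10, m11, hKpos, mD3]
  have hGlb : -(2*(D-1)^3*K + 2*D*(D*D)) ≤ ((D*x-1)*(x-1)*P + (D-1)^2*x)*P := by
    rw [e9]
    have m12 : (D-1)*P*(-σ) ≤ (D-1)*P*((D-1) - (1-x)*P) := by
      apply mul_le_mul_of_nonneg_left ?_ (mul_nonneg (by linarith only [hD1]) hP0.le)
      rw [hadef] at hβ2
      linarith only [hβ2]
    have m13 : (D-1)*P*(-σ) = -((D-1)*(2*(D-1)^2*K)) := by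
      linear_combination (-(D-1)) * hσP
    have m14 : (0:ℝ) ≤ D*((1-x)*P)^2 := mul_nonneg hD0.le (sq_nonneg _)
    have m15 : (D-1)^2*((1-x)*P) ≤ D*(D*D) := by
      have h5 : (D-1)^2*((1-x)*P) ≤ (D-1)^2*D :=
        mul_le_mul_of_nonneg_left hβD.le (sq_nonneg _)
      nlinarith only [h5, hD0, hD1, mul_nonneg (mul_nonneg hD0.le hD0.le) (by linarith only [hD1] : (0:ℝ) ≤ D - 1)]
    linarith only [m12, m13, m14, m15, mD3]
  have habs : |(D*x-1)*(x-1)*P + (D-1)^2*x| * P ≤ 2*(D-1)^3*K + 2*D*(D*D) := by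
    calc |(D*x-1)*(x-1)*P + (D-1)^2*x| * P
        = |(D*x-1)*(x-1)*P + (D-1)^2*x| * |P| := by rw [abs_of_pos hP0]
      _ = |((D*x-1)*(x-1)*P + (D-1)^2*x) * P| := (abs_mul _ _).symm
      _ ≤ 2*(D-1)^3*K + 2*D*(D*D) := abs_le.mpr ⟨hGlb, hGub⟩
  have hfinal : 2*(D-1)^3*K + 2*D*(D*D) ≤ 2*K*(D+1)*x*(D*D) := by
    have m16 : (0:ℝ) ≤ K * (23/4*D^2 - 25/4*D + 2) :=
      mul_nonneg (by linarith only [hK1]) (by nlinarith only [hD2, sq_nonneg (D-2)])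
    have m17 : (0:ℝ) ≤ (K - D)*D^2 := mul_nonneg (by linarith only [hKD]) (sq_nonneg D)
    have m18 : 2*K*(D+1)*(D*D)*(1 - 1/(8*D)) ≤ 2*K*(D+1)*(D*D)*x := by
      apply mul_le_mul_of_nonneg_left hxlow
      have : (0:ℝ) ≤ (D+1)*(D*D) := by positivity
      nlinarith only [this, hK1]
    have e10 : 2*K*(D+1)*(D*D)*(1 - 1/(8*D)) = 2*K*(D+1)*(D*D) - K*(D+1)*D/4 := by
      field_simp
      ring
    rw [e10] at m18
    nlinarith only [m16, m17, m18]
  calc |(D*x-1)*(x-1)*P + (D-1)^2*x| * P ≤ 2*(D-1)^3*K + 2*D*(D*D) := habs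
    _ ≤ 2*K*(D+1)*x*(D*D) := hfinal
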